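/- Every finitely generated Boole-De Morgan algebra is finite. -/

import Mathlib

/-- A Boole-De Morgan algebra: a Boolean algebra equipped with an additional
De Morgan negation `dm`. -/
class BooleDeMorganAlgebra (α : Type*) extends BooleanAlgebra α where
  dm : α → α
  dm_dm : ∀ x : α, dm (dm x) = x
  dm_sup : ∀ x y : α, dm (x ⊔ y) = dm x ⊓ dm y

/-- Membership in the Boole-De Morgan subalgebra generated by a set `S`:
the smallest subset containing `S`, `⊥`, `⊤` and closed under join, meet,
Boolean complement and De Morgan negation. -/
inductive BDMGen {α : Type*} [BooleDeMorganAlgebra α] (S : Set α) : α → Prop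
  | of {x : α} : x ∈ S → BDMGen S x
  | bot : BDMGen S ⊥
  | top : BDMGen S ⊤
  | sup {x y : α} : BDMGen S x → BDMGen S y → BDMGen S (x ⊔ y)
  | inf {x y : α} : BDMGen S x → BDMGen S y → BDMGen S (x ⊓ y)
  | compl {x : α} : BDMGen S x → BDMGen S xᶜ
  | dm {x : α} : BDMGen S x → BDMGen S (BooleDeMorganAlgebra.dm x)

section BDMAux

/-- Boolean-only generation (no De Morgan negation). -/
inductive BoolGen {α : Type*} [BooleanAlgebra α] (S : Set α) : α → Prop
  | of {x : α} : x ∈ S → BoolGen S x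
  | bot : BoolGen S ⊥
  | top : BoolGen S ⊤
  | sup {x y : α} : BoolGen S x → BoolGen S y → BoolGen S (x ⊔ y)
  | inf {x y : α} : BoolGen S x → BoolGen S y → BoolGen S (x ⊓ y)
  | compl {x : α} : BoolGen S x → BoolGen S xᶜ

variable {α : Type*} [BooleanAlgebra α]

lemma split_eq (a b : α) : b = (b ⊓ a) ⊔ (b ⊓ aᶜ) := by
  rw [← inf_sup_left, sup_compl_eq_top, inf_top_eq]

lemma sup_combine (a p q p' q' : α) :
    ((p ⊓ a) ⊔ (q ⊓ aᶜ)) ⊔ ((p' ⊓ a) ⊔ (q' ⊓ aᶜ)) = ((p ⊔ p') ⊓ a) ⊔ ((q ⊔ q') ⊓ aᶜ) := by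
  rw [sup_sup_sup_comm, inf_sup_right, inf_sup_right]

lemma inf_combine (a p q p' q' : α) :
    ((p ⊓ a) ⊔ (q ⊓ aᶜ)) ⊓ ((p' ⊓ a) ⊔ (q' ⊓ aᶜ)) = ((p ⊓ p') ⊓ a) ⊔ ((q ⊓ q') ⊓ aᶜ) := by
  rw [inf_sup_left, inf_sup_right, inf_sup_right]
  have h1 : (p ⊓ a) ⊓ (p' ⊓ a) = (p ⊓ p') ⊓ a := by
    rw [inf_assoc, inf_comm a, inf_assoc, inf_idem, ← inf_assoc]
  have h2 : (q ⊓ aᶜ) ⊓ (p' ⊓ a) = ⊥ := by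
    rw [inf_assoc, inf_comm p', ← inf_assoc, inf_assoc q, ← inf_assoc aᶜ,
      compl_inf_eq_bot, bot_inf_eq, inf_bot_eq]
  have h3 : (p ⊓ a) ⊓ (q' ⊓ aᶜ) = ⊥ := by
    rw [inf_assoc, inf_comm q', ← inf_assoc, inf_assoc p, ← inf_assoc a,
      inf_compl_eq_bot, bot_inf_eq, inf_bot_eq]
  have h4 : (q ⊓ aᶜ) ⊓ (q' ⊓ aᶜ) = (q ⊓ q') ⊓ aᶜ := by
    rw [inf_assoc, inf_comm aᶜ, inf_assoc, inf_idem, ← inf_assoc]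
  rw [h1, h2, h3, h4, sup_bot_eq, bot_sup_eq]

lemma compl_combine (a p q : α) :
    ((p ⊓ a) ⊔ (q ⊓ aᶜ))ᶜ = (pᶜ ⊓ a) ⊔ (qᶜ ⊓ aᶜ) := by
  symm
  apply IsCompl.eq_compl
  constructor
  · rw [disjoint_iff, inf_comm, inf_combine, inf_compl_eq_bot, inf_compl_eq_bot,
      bot_inf_eq, bot_inf_eq, sup_idem]
  · rw [codisjoint_iff, sup_comm, sup_combine, sup_compl_eq_top, sup_compl_eq_top,
      top_inf_eq, top_inf_eq, sup_compl_eq_top]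

/-- The Boolean subalgebra generated by a finite set is finite. -/
lemma boolGen_finite (t : Finset α) : {x : α | BoolGen (↑t : Set α) x}.Finite := by
  classical
  induction t using Finset.induction_on with
  | empty =>
    apply Set.Finite.subset ((Set.finite_singleton (⊤:α)).insert ⊥)
    intro x hx
    induction hx with
    | of h => simp at h
    | bot => simp
    | top => simp
    | sup hx hy ihx ihy =>
      rcases ihx with h | h <;> rcases ihy with h' | h' <;> simp_all
    | inf hx hy ihx ihy =>
      rcases ihx with h | h <;> rcases ihy with h' | h' <;> simp_all
    | compl hx ih => rcases ih with h | h <;> simp_all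
  | insert a t ha ih =>
    apply Set.Finite.subset (((ih.prod ih).image
      (fun p : α × α => (p.1 ⊓ a) ⊔ (p.2 ⊓ aᶜ))))
    intro x hx
    have key : ∃ p q : α, BoolGen (↑t : Set α) p ∧ BoolGen (↑t : Set α) q ∧
        x = (p ⊓ a) ⊔ (q ⊓ aᶜ) := by
      clear ih
      induction hx with
      | of h =>
        rename_i b
        simp only [Finset.coe_insert, Set.mem_insert_iff] at h
        rcases h with rfl | h
        · exact ⟨⊤, ⊥, BoolGen.top, BoolGen.bot, by simp⟩
        · exact ⟨b, b, BoolGen.of h, BoolGen.of h, split_eq a b⟩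
      | bot => exact ⟨⊥, ⊥, BoolGen.bot, BoolGen.bot, by simp⟩
      | top => exact ⟨⊤, ⊤, BoolGen.top, BoolGen.top, split_eq a ⊤⟩
      | sup hx hy ihx ihy =>
        obtain ⟨p, q, hp, hq, rfl⟩ := ihx
        obtain ⟨p', q', hp', hq', rfl⟩ := ihy
        exact ⟨p ⊔ p', q ⊔ q', hp.sup hp', hq.sup hq', sup_combine a p q p' q'⟩
      | inf hx hy ihx ihy =>
        obtain ⟨p, q, hp, hq, rfl⟩ := ihx
        obtain ⟨p', q', hp', hq', rfl⟩ := ihy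
        exact ⟨p ⊓ p', q ⊓ q', hp.inf hp', hq.inf hq', inf_combine a p q p' q'⟩
      | compl hx ihx =>
        obtain ⟨p, q, hp, hq, rfl⟩ := ihx
        exact ⟨pᶜ, qᶜ, hp.compl, hq.compl, compl_combine a p q⟩
    obtain ⟨p, q, hp, hq, rfl⟩ := key
    exact ⟨(p, q), ⟨hp, hq⟩, rfl⟩

end BDMAux

section DMAux

variable {α : Type*} [BooleDeMorganAlgebra α]

open BooleDeMorganAlgebra

lemma dm_inf' (x y : α) : dm (x ⊓ y) = dm x ⊔ dm y := by
  conv_lhs => rw [← dm_dm x, ← dm_dm y, ← dm_sup, dm_dm]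

lemma dm_antitone {x y : α} (h : x ≤ y) : dm y ≤ dm x := by
  have : dm (x ⊔ y) = dm x ⊓ dm y := dm_sup x y
  rw [sup_eq_right.mpr h] at this
  rw [this]; exact inf_le_left

lemma dm_top' : dm (⊤ : α) = ⊥ := by
  have h := dm_antitone (le_top : dm (⊥ : α) ≤ ⊤)
  rw [dm_dm] at h
  exact le_bot_iff.mp h

lemma dm_bot' : dm (⊥ : α) = ⊤ := by
  have := congrArg dm (dm_top' (α := α))
  rw [dm_dm] at this; exact this.symm

lemma dm_compl' (x : α) : dm xᶜ = (dm x)ᶜ := by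
  apply IsCompl.eq_compl
  constructor
  · rw [disjoint_iff, ← dm_sup, compl_sup_eq_top, dm_top']
  · rw [codisjoint_iff, ← dm_inf', compl_inf_eq_bot, dm_bot']

end DMAux

/-- Every finitely generated Boole-De Morgan algebra is finite: the subalgebra
generated by a finite set is finite. -/
theorem booleDeMorgan_locally_finite {α : Type*} [BooleDeMorganAlgebra α]
    (S : Set α) (hS : S.Finite) : {x : α | BDMGen S x}.Finite := by
  classical
  open BooleDeMorganAlgebra in
  have hT : (S ∪ dm '' S).Finite := hS.union (hS.image dm)
  apply Set.Finite.subset (boolGen_finite hT.toFinset)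
  have hTS : (↑hT.toFinset : Set α) = S ∪ dm '' S := hT.coe_toFinset
  intro x hx
  have dm_closed : ∀ y : α, BoolGen (S ∪ dm '' S) y → BoolGen (S ∪ dm '' S) (dm y) := by
    intro y hy
    induction hy with
    | of h =>
      rcases h with h | ⟨z, hz, rfl⟩
      · exact BoolGen.of (Or.inr ⟨_, h, rfl⟩)
      · rw [dm_dm]; exact BoolGen.of (Or.inl hz)
    | bot => rw [dm_bot']; exact BoolGen.top
    | top => rw [dm_top']; exact BoolGen.bot
    | sup _ _ ihx ihy => rw [dm_sup]; exact ihx.inf ihy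
    | inf _ _ ihx ihy => rw [dm_inf']; exact ihx.sup ihy
    | compl _ ih => rw [dm_compl']; exact ih.compl
  have main : BoolGen (S ∪ dm '' S) x := by
    induction hx with
    | of h => exact BoolGen.of (Or.inl h)
    | bot => exact BoolGen.bot
    | top => exact BoolGen.top
    | sup _ _ ihx ihy => exact ihx.sup ihy
    | inf _ _ ihx ihy => exact ihx.inf ihy
    | compl _ ih => exact ih.compl
    | dm _ ih => exact dm_closed _ ih
  simpa [hTS] using main
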